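/- Let C be a binary constant-weight code with parameters (S, N, W, K) with 1 ≤ K < W ≤ S. Fix an integer ℓ ≥ 1 and d' ∈ [1:K], and set S' = S − d', W' = W − d', K' = K − d', and A' = Σ_{u=1}^{ℓ} ( C(W',u)² · C_{ℓ,u} / C(S',u) ), where C_{ℓ,u} = Σ_{k=0}^{u} (−1)^k C(u,k) (u−k)^ℓ. If A' > (K')^ℓ, then N ≤ ⌊(S/W)·⌊((S−1)/(W−1))·⌊ … ⌊((S'+1)/(W'+1))·⌊((W')^ℓ − (K')^ℓ)/(A' − (K')^ℓ)⌋⌋ … ⌋⌋⌋, where the nesting applies the factor (S−t)/(W−t) and a floor for t = d'−1, d'−2, …, 0 from the inside out. -/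

import Mathlib

open Finset Function

/-- Hamming weight of a binary vector. -/
def cwWeight {σ : Type*} [Fintype σ] (a : σ → Bool) : ℕ :=
  (Finset.univ.filter (fun s => a s = true)).card

/-- Overlap (number of common 1-coordinates) of two binary vectors. -/
def cwOverlap {σ : Type*} [Fintype σ] (a b : σ → Bool) : ℕ :=
  (Finset.univ.filter (fun s => a s = true ∧ b s = true)).card

/-- A binary constant-weight code with weight `W` and maximum pairwise overlap `K`:
the codewords are distinct, each has Hamming weight `W`, and every pair of distinct
codewords has overlap at most `K`. -/
def IsCWC {ι σ : Type*} [Fintype σ] (W K : ℕ) (x : ι → σ → Bool) : Prop :=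
  Function.Injective x ∧ (∀ j, cwWeight (x j) = W) ∧
    ∀ j j', j ≠ j' → cwOverlap (x j) (x j') ≤ K

-- count of functions with range inside V
lemma card_into (ℓ : ℕ) {σ : Type*} [Fintype σ] [DecidableEq σ] (V : Finset σ) :
    (Finset.univ.filter (fun f : Fin ℓ → σ => ∀ i, f i ∈ V)).card = V.card ^ ℓ := by
  have : (Finset.univ.filter (fun f : Fin ℓ → σ => ∀ i, f i ∈ V))
      = Fintype.piFinset (fun _ : Fin ℓ => V) := by
    ext f; simp [Fintype.mem_piFinset]
  rw [this, Fintype.card_piFinset]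
  simp

lemma alt_inner {σ : Type*} [DecidableEq σ] (B U : Finset σ) :
    (∑ V ∈ U.powerset.filter (fun V => B ⊆ V), (-1 : ℤ) ^ (U.card - V.card))
      = if B = U then 1 else 0 := by
  by_cases hBU : B ⊆ U
  · have key : ∑ V ∈ U.powerset.filter (fun V => B ⊆ V), (-1 : ℤ) ^ (U.card - V.card)
        = ∑ D ∈ (U \ B).powerset, (-1 : ℤ) ^ ((U \ B).card - D.card) := by
      refine Finset.sum_bij' (fun V _ => V \ B) (fun D _ => D ∪ B) ?_ ?_ ?_ ?_ ?_
      · intro V hV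
        simp only [mem_filter, mem_powerset] at hV
        exact mem_powerset.2 (sdiff_subset_sdiff hV.1 le_rfl)
      · intro D hD
        simp only [mem_powerset] at hD
        simp only [mem_filter, mem_powerset]
        constructor
        · exact union_subset (hD.trans (sdiff_subset)) hBU
        · exact subset_union_right
      · intro V hV
        simp only [mem_filter, mem_powerset] at hV
        exact sdiff_union_of_subset hV.2
      · intro D hD
        simp only [mem_powerset] at hD
        have hdisj : Disjoint D B := disjoint_of_subset_left hD sdiff_disjoint
        rw [union_sdiff_distrib, sdiff_self]; simp [hdisj.sdiff_eq_left]
      · intro V hV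
        simp only [mem_filter, mem_powerset] at hV
        congr 1
        have h1 : (V \ B).card = V.card - B.card := card_sdiff_of_subset hV.2
        have h2 : (U \ B).card = U.card - B.card := card_sdiff_of_subset hBU
        have hBV : B.card ≤ V.card := card_le_card hV.2
        have hVU : V.card ≤ U.card := card_le_card hV.1
        omega
    rw [key]
    set r := (U \ B).card with hr
    have step : ∀ D ∈ (U \ B).powerset,
        (-1 : ℤ) ^ (r - D.card) = (-1 : ℤ) ^ r * (-1 : ℤ) ^ D.card := by
      intro D hD
      have hd : D.card ≤ r := card_le_card (mem_powerset.1 hD)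
      have : (-1 : ℤ) ^ (r - D.card) * ((-1 : ℤ) ^ D.card * (-1 : ℤ) ^ D.card)
          = (-1 : ℤ) ^ r * (-1 : ℤ) ^ D.card := by
        rw [← mul_assoc, ← pow_add, Nat.sub_add_cancel hd]
      simpa [← mul_pow] using this
    rw [Finset.sum_congr rfl step, ← Finset.mul_sum, Finset.sum_powerset_neg_one_pow_card]
    by_cases hBU2 : B = U
    · subst hBU2
      simp [hr]
    · have : U \ B ≠ ∅ := by
        intro h
        exact hBU2 (Finset.Subset.antisymm hBU (by
          intro a ha
          by_contra hna
          exact absurd h (Finset.ne_empty_of_mem (Finset.mem_sdiff.2 ⟨ha, hna⟩))))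
      simp [this, hBU2]
  · have : U.powerset.filter (fun V => B ⊆ V) = ∅ := by
      ext V; simp only [mem_filter, mem_powerset, notMem_empty, iff_false]
      rintro ⟨h1, h2⟩; exact hBU (h2.trans h1)
    rw [this]
    simp only [sum_empty]
    have : B ≠ U := fun h => hBU (h ▸ le_rfl)
    simp [this]

lemma fiber_card_eq {σ : Type*} [Fintype σ] [DecidableEq σ] (ℓ : ℕ) (U : Finset σ) :
    ((Finset.univ.filter (fun f : Fin ℓ → σ => Finset.image f Finset.univ = U)).card : ℤ)
      = ∑ k ∈ Finset.range (U.card + 1),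
          (-1 : ℤ) ^ k * (U.card.choose k : ℤ) * ((U.card - k : ℕ) : ℤ) ^ ℓ := by
  set m := U.card with hm
  -- step 1: inclusion-exclusion
  have step1 : ((Finset.univ.filter
        (fun f : Fin ℓ → σ => Finset.image f Finset.univ = U)).card : ℤ)
      = ∑ V ∈ U.powerset, (-1 : ℤ) ^ (m - V.card) * (V.card : ℤ) ^ ℓ := by
    have expand : ∀ V : Finset σ, ((V.card : ℤ)) ^ ℓ
        = ∑ f ∈ (Finset.univ : Finset (Fin ℓ → σ)),
            (if ∀ i, f i ∈ V then (1 : ℤ) else 0) := by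
      intro V
      rw [Finset.sum_boole, card_into ℓ V]
      push_cast
      ring
    symm
    calc ∑ V ∈ U.powerset, (-1 : ℤ) ^ (m - V.card) * (V.card : ℤ) ^ ℓ
        = ∑ V ∈ U.powerset, ∑ f ∈ (Finset.univ : Finset (Fin ℓ → σ)),
            (-1 : ℤ) ^ (m - V.card) * (if ∀ i, f i ∈ V then (1 : ℤ) else 0) := by
          refine Finset.sum_congr rfl fun V _ => ?_
          rw [expand V, Finset.mul_sum]
      _ = ∑ f ∈ (Finset.univ : Finset (Fin ℓ → σ)), ∑ V ∈ U.powerset,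
            (-1 : ℤ) ^ (m - V.card) * (if ∀ i, f i ∈ V then (1 : ℤ) else 0) :=
          Finset.sum_comm
      _ = ∑ f ∈ (Finset.univ : Finset (Fin ℓ → σ)),
            (if Finset.image f Finset.univ = U then (1 : ℤ) else 0) := by
          refine Finset.sum_congr rfl fun f _ => ?_
          have himg : ∀ V : Finset σ, (∀ i, f i ∈ V) ↔ Finset.image f Finset.univ ⊆ V := by
            intro V
            rw [Finset.image_subset_iff]
            simp
          calc ∑ V ∈ U.powerset,
                (-1 : ℤ) ^ (m - V.card) * (if ∀ i, f i ∈ V then (1 : ℤ) else 0)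
              = ∑ V ∈ U.powerset,
                (if Finset.image f Finset.univ ⊆ V then (-1 : ℤ) ^ (m - V.card) else 0) := by
                refine Finset.sum_congr rfl fun V _ => ?_
                rw [mul_ite, mul_one, mul_zero]
                simp [himg V]
            _ = ∑ V ∈ U.powerset.filter (fun V => Finset.image f Finset.univ ⊆ V),
                (-1 : ℤ) ^ (m - V.card) := (Finset.sum_filter _ _).symm
            _ = if Finset.image f Finset.univ = U then (1 : ℤ) else 0 :=
                alt_inner _ _
      _ = ((Finset.univ.filter
            (fun f : Fin ℓ → σ => Finset.image f Finset.univ = U)).card : ℤ) := by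
          rw [Finset.sum_boole]
  -- step 2: group by cardinality
  rw [step1, Finset.sum_powerset]
  have inner : ∀ j ∈ Finset.range (m + 1),
      (∑ V ∈ Finset.powersetCard j U, (-1 : ℤ) ^ (m - V.card) * (V.card : ℤ) ^ ℓ)
        = (m.choose j : ℤ) * ((-1 : ℤ) ^ (m - j) * (j : ℤ) ^ ℓ) := by
    intro j hj
    have : ∀ V ∈ Finset.powersetCard j U,
        (-1 : ℤ) ^ (m - V.card) * (V.card : ℤ) ^ ℓ = (-1 : ℤ) ^ (m - j) * (j : ℤ) ^ ℓ := by
      intro V hV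
      rw [(Finset.mem_powersetCard.1 hV).2]
    rw [Finset.sum_congr rfl this, Finset.sum_const, Finset.card_powersetCard, nsmul_eq_mul]
  rw [Finset.sum_congr rfl inner]
  rw [← Finset.sum_range_reflect]
  refine Finset.sum_congr rfl fun k hk => ?_
  have hk' : k ≤ m := Nat.lt_succ_iff.1 (Finset.mem_range.1 hk)
  have h1 : m + 1 - 1 - k = m - k := by omega
  rw [h1, Nat.choose_symm hk', Nat.sub_sub_self hk']
  push_cast
  ring

lemma moment_bound {σ : Type*} [Fintype σ] [DecidableEq σ] (w k ℓ : ℕ) (hl : 1 ≤ ℓ)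
    (hkw : k < w)
    (C : Finset (σ → Bool)) (hw : ∀ c ∈ C, cwWeight c = w)
    (hk : ∀ c ∈ C, ∀ c' ∈ C, c ≠ c' → cwOverlap c c' ≤ k)
    (A : ℚ)
    (hA : A = ∑ u ∈ Finset.Icc 1 ℓ, ((w.choose u : ℚ))^2 *
        (∑ j ∈ Finset.range (u+1), (-1:ℚ)^j * (u.choose j : ℚ) * ((u - j : ℕ) : ℚ)^ℓ)
        / (((Fintype.card σ).choose u : ℚ)))
    (hAk : ((k:ℚ))^ℓ < A) :
    (C.card : ℚ) ≤ ((w:ℚ)^ℓ - (k:ℚ)^ℓ) / (A - (k:ℚ)^ℓ) := by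
  classical
  have hkwQ : ((k:ℚ))^ℓ ≤ (w:ℚ)^ℓ := by
    apply pow_le_pow_left₀ (by positivity)
    exact_mod_cast hkw.le
  have hden : (0:ℚ) < A - (k:ℚ)^ℓ := by linarith
  rcases C.eq_empty_or_nonempty with hC | ⟨c₀, hc₀⟩
  · rw [hC]; simp
    apply div_nonneg <;> linarith
  -- now C is nonempty
  set n := Fintype.card σ with hn
  have hwn : w ≤ n := by
    rw [← hw c₀ hc₀, cwWeight, hn, ← Finset.card_univ]
    exact Finset.card_filter_le _ _
  set N := C.card with hN
  have hN1 : 1 ≤ N := Finset.card_pos.2 ⟨c₀, hc₀⟩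
  -- key quantities
  set T : (Fin ℓ → σ) → ℚ :=
    fun f => ∑ c ∈ C, ∏ i, (if c (f i) = true then (1:ℚ) else 0) with hT
  set TU : Finset σ → ℚ :=
    fun U => ∑ c ∈ C, (if ∀ s ∈ U, c s = true then (1:ℚ) else 0) with hTU
  set Sq : ℕ → ℚ := fun u =>
    ∑ j ∈ Finset.range (u+1), (-1:ℚ)^j * (u.choose j : ℚ) * ((u - j : ℕ) : ℚ)^ℓ with hSq
  -- fiber cardinality in ℚ
  have fibQ : ∀ U : Finset σ,
      ((Finset.univ.filter (fun f : Fin ℓ → σ => Finset.image f Finset.univ = U)).card : ℚ)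
        = Sq U.card := by
    intro U
    have h := fiber_card_eq ℓ U
    have h2 := congrArg (fun z : ℤ => (z : ℚ)) h
    push_cast at h2
    rw [hSq]
    exact h2
  -- (F1) T f = TU (image f univ)
  have F1 : ∀ f : Fin ℓ → σ, T f = TU (Finset.image f Finset.univ) := by
    intro f
    rw [hT, hTU]
    refine Finset.sum_congr rfl fun c _ => ?_
    rw [Finset.prod_boole]
    congr 1
    simp only [eq_iff_iff]
    constructor
    · intro h s hs
      rcases Finset.mem_image.1 hs with ⟨i, -, rfl⟩
      exact h i (Finset.mem_univ i)
    · intro h i _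
      exact h (f i) (Finset.mem_image_of_mem f (Finset.mem_univ i))
  -- (F2) double sum of overlap powers equals sum of T^2
  have F2 : (∑ c ∈ C, ∑ c' ∈ C, ((cwOverlap c c' : ℚ))^ℓ)
      = ∑ f ∈ (Finset.univ : Finset (Fin ℓ → σ)), (T f)^2 := by
    have ov : ∀ c c' : σ → Bool, ((cwOverlap c c' : ℚ))^ℓ
        = ∑ f ∈ (Finset.univ : Finset (Fin ℓ → σ)),
            (∏ i, (if c (f i) = true then (1:ℚ) else 0)) *
            (∏ i, (if c' (f i) = true then (1:ℚ) else 0)) := by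
      intro c c'
      have h1 : ((cwOverlap c c' : ℚ)) = ∑ s ∈ (Finset.univ : Finset σ),
          (if c s = true ∧ c' s = true then (1:ℚ) else 0) := by
        rw [Finset.sum_boole, cwOverlap]
      rw [h1]
      have h2 : (∑ s ∈ (Finset.univ : Finset σ),
          (if c s = true ∧ c' s = true then (1:ℚ) else 0)) ^ ℓ
          = ∏ i : Fin ℓ, ∑ s ∈ (Finset.univ : Finset σ),
              (if c s = true ∧ c' s = true then (1:ℚ) else 0) := by
        rw [Finset.prod_const, Finset.card_univ, Fintype.card_fin]
      rw [h2, Finset.prod_univ_sum]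
      rw [Fintype.piFinset_univ]
      refine Finset.sum_congr rfl fun f _ => ?_
      rw [← Finset.prod_mul_distrib]
      refine Finset.prod_congr rfl fun i _ => ?_
      by_cases h3 : c (f i) = true <;> by_cases h4 : c' (f i) = true <;> simp [h3, h4]
    calc (∑ c ∈ C, ∑ c' ∈ C, ((cwOverlap c c' : ℚ))^ℓ)
        = ∑ c ∈ C, ∑ c' ∈ C, ∑ f ∈ (Finset.univ : Finset (Fin ℓ → σ)),
            (∏ i, (if c (f i) = true then (1:ℚ) else 0)) *
            (∏ i, (if c' (f i) = true then (1:ℚ) else 0)) := by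
          exact Finset.sum_congr rfl fun c _ => Finset.sum_congr rfl fun c' _ => ov c c'
      _ = ∑ f ∈ (Finset.univ : Finset (Fin ℓ → σ)), ∑ c ∈ C, ∑ c' ∈ C,
            (∏ i, (if c (f i) = true then (1:ℚ) else 0)) *
            (∏ i, (if c' (f i) = true then (1:ℚ) else 0)) := by
          rw [show (∑ c ∈ C, ∑ c' ∈ C, ∑ f ∈ (Finset.univ : Finset (Fin ℓ → σ)),
            (∏ i, (if c (f i) = true then (1:ℚ) else 0)) *
            (∏ i, (if c' (f i) = true then (1:ℚ) else 0)))
            = ∑ c ∈ C, ∑ f ∈ (Finset.univ : Finset (Fin ℓ → σ)), ∑ c' ∈ C,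
            (∏ i, (if c (f i) = true then (1:ℚ) else 0)) *
            (∏ i, (if c' (f i) = true then (1:ℚ) else 0))
            from Finset.sum_congr rfl fun c _ => Finset.sum_comm]
          exact Finset.sum_comm
      _ = ∑ f ∈ (Finset.univ : Finset (Fin ℓ → σ)), (T f)^2 := by
          refine Finset.sum_congr rfl fun f _ => ?_
          rw [hT, sq]
          rw [Finset.sum_mul]
          refine Finset.sum_congr rfl fun c _ => ?_
          rw [Finset.mul_sum]
  -- (F3) fiberwise decomposition
  have hdisj : (↑(Finset.Icc 1 ℓ) : Set ℕ).PairwiseDisjoint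
      (fun u => Finset.powersetCard u (Finset.univ : Finset σ)) := by
    intro a _ b _ hab
    apply Finset.disjoint_left.2
    intro U hUa hUb
    exact hab ((Finset.mem_powersetCard.1 hUa).2.symm.trans (Finset.mem_powersetCard.1 hUb).2)
  have hne : Nonempty (Fin ℓ) := ⟨⟨0, hl⟩⟩
  have hmaps : ∀ f ∈ (Finset.univ : Finset (Fin ℓ → σ)),
      Finset.image f Finset.univ ∈ (Finset.Icc 1 ℓ).biUnion
        (fun u => Finset.powersetCard u (Finset.univ : Finset σ)) := by
    intro f _
    apply Finset.mem_biUnion.2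
    refine ⟨(Finset.image f Finset.univ).card, ?_, ?_⟩
    · rw [Finset.mem_Icc]
      refine ⟨Finset.card_pos.2 (Finset.Nonempty.image Finset.univ_nonempty f), ?_⟩
      calc (Finset.image f Finset.univ).card
          ≤ (Finset.univ : Finset (Fin ℓ)).card := Finset.card_image_le
        _ = ℓ := by simp
    · exact Finset.mem_powersetCard.2 ⟨Finset.subset_univ _, rfl⟩
  have F3 : (∑ f ∈ (Finset.univ : Finset (Fin ℓ → σ)), (T f)^2)
      = ∑ u ∈ Finset.Icc 1 ℓ, ∑ U ∈ Finset.powersetCard u (Finset.univ : Finset σ),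
          Sq u * (TU U)^2 := by
    rw [← Finset.sum_fiberwise_of_maps_to hmaps (fun f => (T f)^2),
      Finset.sum_biUnion hdisj]
    refine Finset.sum_congr rfl fun u hu => Finset.sum_congr rfl fun U hU => ?_
    have hcardU : U.card = u := (Finset.mem_powersetCard.1 hU).2
    have hconst : ∀ f ∈ Finset.univ.filter
        (fun f : Fin ℓ → σ => Finset.image f Finset.univ = U),
        (T f)^2 = (TU U)^2 := by
      intro f hf
      rw [F1 f, (Finset.mem_filter.1 hf).2]
    rw [Finset.sum_congr rfl hconst, Finset.sum_const, nsmul_eq_mul, fibQ U, hcardU]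
  -- nonnegativity of Sq for feasible u
  have SqNonneg : ∀ u, u ≤ n → 0 ≤ Sq u := by
    intro u hu
    obtain ⟨U, -, hUcard⟩ := Finset.exists_subset_card_eq
      (show u ≤ (Finset.univ : Finset σ).card by simpa [hn] using hu)
    rw [← hUcard, ← fibQ U]
    positivity
  -- (F4) column sums
  have F4 : ∀ u : ℕ, (∑ U ∈ Finset.powersetCard u (Finset.univ : Finset σ), TU U)
      = (N : ℚ) * (w.choose u : ℚ) := by
    intro u
    rw [hTU, Finset.sum_comm]
    rw [show (N:ℚ) * (w.choose u : ℚ) = ∑ c ∈ C, (w.choose u : ℚ) by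
      rw [Finset.sum_const, nsmul_eq_mul, hN]]
    refine Finset.sum_congr rfl fun c hc => ?_
    rw [Finset.sum_boole]
    have hfil : (Finset.powersetCard u (Finset.univ : Finset σ)).filter
        (fun U => ∀ s ∈ U, c s = true)
        = Finset.powersetCard u (Finset.univ.filter (fun s => c s = true)) := by
      ext U
      simp only [Finset.mem_filter, Finset.mem_powersetCard, Finset.subset_univ, true_and]
      constructor
      · rintro ⟨hcard, hall⟩
        exact ⟨fun s hs => Finset.mem_filter.2 ⟨Finset.mem_univ s, hall s hs⟩, hcard⟩
      · rintro ⟨hsub, hcard⟩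
        exact ⟨hcard, fun s hs => (Finset.mem_filter.1 (hsub hs)).2⟩
    have key : ((Finset.powersetCard u (Finset.univ : Finset σ)).filter
        (fun U => ∀ s ∈ U, c s = true)).card = w.choose u := by
      rw [hfil, Finset.card_powersetCard]
      have hwc : (Finset.univ.filter (fun s => c s = true)).card = w := hw c hc
      rw [hwc]
    rw [key]
  -- (F5) per-u Cauchy-Schwarz bound
  have F5 : ∀ u ∈ Finset.Icc 1 ℓ,
      (N:ℚ)^2 * ((w.choose u : ℚ))^2 * Sq u / ((n.choose u : ℚ))
        ≤ ∑ U ∈ Finset.powersetCard u (Finset.univ : Finset σ), Sq u * (TU U)^2 := by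
    intro u _
    by_cases hun : u ≤ n
    · have hch : (0:ℚ) < (n.choose u : ℚ) := by exact_mod_cast Nat.choose_pos hun
      have hSqu : 0 ≤ Sq u := SqNonneg u hun
      have hcs : (∑ U ∈ Finset.powersetCard u (Finset.univ : Finset σ), TU U)^2
          ≤ ((n.choose u : ℚ)) *
            ∑ U ∈ Finset.powersetCard u (Finset.univ : Finset σ), (TU U)^2 := by
        have h := sq_sum_le_card_mul_sum_sq
          (s := Finset.powersetCard u (Finset.univ : Finset σ)) (f := TU)
        rwa [Finset.card_powersetCard, Finset.card_univ, ← hn] at h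
      rw [div_le_iff₀ hch, ← Finset.mul_sum]
      calc (N:ℚ)^2 * ((w.choose u : ℚ))^2 * Sq u
          = Sq u * ((N:ℚ) * (w.choose u : ℚ))^2 := by ring
        _ = Sq u * (∑ U ∈ Finset.powersetCard u (Finset.univ : Finset σ), TU U)^2 := by
            rw [F4 u]
        _ ≤ Sq u * (((n.choose u : ℚ)) *
            ∑ U ∈ Finset.powersetCard u (Finset.univ : Finset σ), (TU U)^2) :=
            mul_le_mul_of_nonneg_left hcs hSqu
        _ = Sq u * (∑ U ∈ Finset.powersetCard u (Finset.univ : Finset σ), (TU U)^2)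
            * (n.choose u : ℚ) := by ring
    · have h0 : (n.choose u : ℚ) = 0 := by
        rw [Nat.choose_eq_zero_of_lt (lt_of_not_ge hun)]; simp
      have hP : Finset.powersetCard u (Finset.univ : Finset σ) = ∅ :=
        Finset.powersetCard_eq_empty.2 (by
          rw [Finset.card_univ, ← hn]; exact lt_of_not_ge hun)
      rw [h0, div_zero, hP, Finset.sum_empty]
  -- (F6) upper bound on the double sum
  have F6 : (∑ c ∈ C, ∑ c' ∈ C, ((cwOverlap c c' : ℚ))^ℓ)
      ≤ (N:ℚ) * (w:ℚ)^ℓ + (N:ℚ) * ((N:ℚ) - 1) * (k:ℚ)^ℓ := by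
    have hper : ∀ c ∈ C, (∑ c' ∈ C, ((cwOverlap c c' : ℚ))^ℓ)
        ≤ (w:ℚ)^ℓ + ((N:ℚ) - 1) * (k:ℚ)^ℓ := by
      intro c hc
      rw [← Finset.add_sum_erase C _ hc]
      have hself : ((cwOverlap c c : ℚ))^ℓ = (w:ℚ)^ℓ := by
        have h1 : cwOverlap c c = cwWeight c := by
          rw [cwOverlap, cwWeight]
          congr 1
          ext s
          simp
        rw [h1, hw c hc]
      rw [hself]
      have bound : ∀ c' ∈ C.erase c, ((cwOverlap c c' : ℚ))^ℓ ≤ (k:ℚ)^ℓ := by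
        intro c' hc'
        have hne' : c ≠ c' := (Finset.ne_of_mem_erase hc').symm
        have h1 := hk c hc c' (Finset.mem_of_mem_erase hc') hne'
        apply pow_le_pow_left₀ (by positivity)
        exact_mod_cast h1
      calc (w:ℚ)^ℓ + ∑ c' ∈ C.erase c, ((cwOverlap c c' : ℚ))^ℓ
          ≤ (w:ℚ)^ℓ + ∑ _c' ∈ C.erase c, (k:ℚ)^ℓ :=
            add_le_add le_rfl (Finset.sum_le_sum bound)
        _ = (w:ℚ)^ℓ + ((C.erase c).card : ℚ) * (k:ℚ)^ℓ := by
            rw [Finset.sum_const, nsmul_eq_mul]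
        _ = (w:ℚ)^ℓ + ((N:ℚ) - 1) * (k:ℚ)^ℓ := by
            rw [Finset.card_erase_of_mem hc, ← hN]
            have : ((N - 1 : ℕ) : ℚ) = (N:ℚ) - 1 := by
              rw [Nat.cast_sub hN1]; simp
            rw [this]
    calc (∑ c ∈ C, ∑ c' ∈ C, ((cwOverlap c c' : ℚ))^ℓ)
        ≤ ∑ _c ∈ C, ((w:ℚ)^ℓ + ((N:ℚ) - 1) * (k:ℚ)^ℓ) := Finset.sum_le_sum hper
      _ = (N:ℚ) * ((w:ℚ)^ℓ + ((N:ℚ) - 1) * (k:ℚ)^ℓ) := by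
          rw [Finset.sum_const, nsmul_eq_mul, hN]
      _ = (N:ℚ) * (w:ℚ)^ℓ + (N:ℚ) * ((N:ℚ) - 1) * (k:ℚ)^ℓ := by ring
  -- main chain
  have main : (N:ℚ)^2 * A ≤ (N:ℚ) * (w:ℚ)^ℓ + (N:ℚ) * ((N:ℚ) - 1) * (k:ℚ)^ℓ := by
    calc (N:ℚ)^2 * A
        = ∑ u ∈ Finset.Icc 1 ℓ,
            (N:ℚ)^2 * ((w.choose u : ℚ))^2 * Sq u / ((n.choose u : ℚ)) := by
          rw [hA, Finset.mul_sum]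
          refine Finset.sum_congr rfl fun u _ => ?_
          simp only [hSq]
          ring
      _ ≤ ∑ u ∈ Finset.Icc 1 ℓ, ∑ U ∈ Finset.powersetCard u (Finset.univ : Finset σ),
            Sq u * (TU U)^2 := Finset.sum_le_sum F5
      _ = ∑ f ∈ (Finset.univ : Finset (Fin ℓ → σ)), (T f)^2 := F3.symm
      _ = ∑ c ∈ C, ∑ c' ∈ C, ((cwOverlap c c' : ℚ))^ℓ := F2.symm
      _ ≤ (N:ℚ) * (w:ℚ)^ℓ + (N:ℚ) * ((N:ℚ) - 1) * (k:ℚ)^ℓ := F6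
  rw [le_div_iff₀ hden]
  have hNpos : (0:ℚ) < (N:ℚ) := by exact_mod_cast hN1
  have h2 : (N:ℚ) * ((N:ℚ) * (A - (k:ℚ)^ℓ)) ≤ (N:ℚ) * ((w:ℚ)^ℓ - (k:ℚ)^ℓ) := by
    nlinarith [main]
  exact le_of_mul_le_mul_left h2 hNpos

lemma filter_subtype_card {σ : Type*} [Fintype σ] [DecidableEq σ] (s : σ)
    (p : σ → Prop) [DecidablePred p] :
    (Finset.univ.filter (fun y : {y : σ // y ≠ s} => p y.val)).card
      = ((Finset.univ.filter p).erase s).card := by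
  refine Finset.card_bij' (fun y _ => y.val)
    (fun z hz => ⟨z, (Finset.mem_erase.1 hz).1⟩) ?_ ?_ ?_ ?_
  · intro y hy
    simp only [Finset.mem_filter, Finset.mem_univ, true_and] at hy
    exact Finset.mem_erase.2 ⟨y.2, Finset.mem_filter.2 ⟨Finset.mem_univ _, hy⟩⟩
  · intro z hz
    simp only [Finset.mem_filter, Finset.mem_univ, true_and]
    exact (Finset.mem_filter.1 (Finset.mem_erase.1 hz).2).2
  · intro y _; rfl
  · intro z _; rfl

lemma res_weight {σ : Type*} [Fintype σ] [DecidableEq σ] (s : σ) (c : σ → Bool)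
    (hcs : c s = true) :
    cwWeight (fun y : {y : σ // y ≠ s} => c y.val) = cwWeight c - 1 := by
  rw [cwWeight, cwWeight, filter_subtype_card s (fun y => c y = true),
    Finset.card_erase_of_mem (Finset.mem_filter.2 ⟨Finset.mem_univ s, hcs⟩)]

lemma res_overlap {σ : Type*} [Fintype σ] [DecidableEq σ] (s : σ) (c c' : σ → Bool)
    (hcs : c s = true) (hcs' : c' s = true) :
    cwOverlap (fun y : {y : σ // y ≠ s} => c y.val) (fun y : {y : σ // y ≠ s} => c' y.val)
      = cwOverlap c c' - 1 := by
  rw [cwOverlap, cwOverlap, filter_subtype_card s (fun y => c y = true ∧ c' y = true),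
    Finset.card_erase_of_mem (Finset.mem_filter.2 ⟨Finset.mem_univ s, hcs, hcs'⟩)]

lemma double_count {σ : Type*} [Fintype σ] [DecidableEq σ] (C : Finset (σ → Bool)) :
    (∑ s : σ, (C.filter (fun c => c s = true)).card) = ∑ c ∈ C, cwWeight c := by
  have h1 : ∀ s : σ, (C.filter (fun c => c s = true)).card
      = ∑ c ∈ C, (if c s = true then 1 else 0) := fun s => Finset.card_filter _ _
  have h2 : ∀ c : σ → Bool, cwWeight c = ∑ s : σ, (if c s = true then 1 else 0) :=
    fun c => Finset.card_filter _ _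
  simp_rw [h1, h2]
  exact Finset.sum_comm

lemma rec_bound (S W K ℓ d' : ℕ) (hKW : K < W) (hWS : W ≤ S) (hd2 : d' ≤ K) (hl : 1 ≤ ℓ)
    (A' : ℚ)
    (hA' : A' = ∑ u ∈ Finset.Icc 1 ℓ,
        (((W - d').choose u : ℚ)) ^ 2 *
          (∑ k ∈ Finset.range (u + 1),
            (-1 : ℚ) ^ k * (u.choose k : ℚ) * (((u - k : ℕ)) : ℚ) ^ ℓ)
          / ((S - d').choose u : ℚ))
    (hAK : (((K - d' : ℕ)) : ℚ) ^ ℓ < A')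
    (F : ℕ → ℤ)
    (hF0 : F 0 = ⌊((((W - d' : ℕ)) : ℚ) ^ ℓ - (((K - d' : ℕ)) : ℚ) ^ ℓ)
        / (A' - (((K - d' : ℕ)) : ℚ) ^ ℓ)⌋)
    (hFt : ∀ t, t < d' →
      F (t + 1) = ⌊(((S - d' + t + 1 : ℕ)) : ℚ) * ((F t : ℤ) : ℚ)
          / (((W - d' + t + 1 : ℕ)) : ℚ)⌋) :
    ∀ t, t ≤ d' → ∀ (σ : Type) [Fintype σ] [DecidableEq σ],
      Fintype.card σ = S - d' + t →
      ∀ C : Finset (σ → Bool), (∀ c ∈ C, cwWeight c = W - d' + t) →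
      (∀ c ∈ C, ∀ c' ∈ C, c ≠ c' → cwOverlap c c' ≤ K - d' + t) →
      (C.card : ℤ) ≤ F t := by
  intro t
  induction t with
  | zero =>
    intro _ σ _ _ hcard C hWt hOv
    rw [hF0, Int.le_floor]
    have hkw : K - d' < W - d' := by omega
    have hres := moment_bound (W - d') (K - d') ℓ hl hkw C
      (by simpa using hWt) (fun c hc c' hc' h => by simpa using hOv c hc c' hc' h)
      A' (by rw [hA', hcard, Nat.add_zero]) hAK
    exact_mod_cast hres
  | succ t ih =>
    intro ht σ _ _ hcard C hWt hOv
    have ht' : t ≤ d' := Nat.le_of_succ_le ht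
    have hw1 : 1 ≤ W - d' + t + 1 := by omega
    -- per-coordinate bound
    have key : ∀ s : σ, ((C.filter (fun c => c s = true)).card : ℤ) ≤ F t := by
      intro s
      set Cs := C.filter (fun c => c s = true) with hCs
      have hmem : ∀ c ∈ Cs, c ∈ C ∧ c s = true := fun c hc => by
        have := Finset.mem_filter.1 hc; exact ⟨this.1, this.2⟩
      set res : (σ → Bool) → ({y : σ // y ≠ s} → Bool) :=
        fun c => fun y => c y.val with hresdef
      have hinj : Set.InjOn res ↑Cs := by
        intro c hc c' hc' hcc
        have h1 := (hmem c (Finset.mem_coe.1 hc)).2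
        have h2 := (hmem c' (Finset.mem_coe.1 hc')).2
        funext z
        by_cases hz : z = s
        · subst hz; rw [h1, h2]
        · exact congrFun hcc ⟨z, hz⟩
      set D := Cs.image res with hD
      have hDcard : D.card = Cs.card := Finset.card_image_of_injOn hinj
      have hcard' : Fintype.card {y : σ // y ≠ s} = S - d' + t := by
        have h1 : Fintype.card {y : σ // ¬ (y = s)} = Fintype.card σ - 1 := by
          rw [Fintype.card_subtype_compl, Fintype.card_subtype_eq]
        have h2 : Fintype.card {y : σ // y ≠ s} = Fintype.card {y : σ // ¬ (y = s)} := rfl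
        omega
      have hDw : ∀ d ∈ D, cwWeight d = W - d' + t := by
        intro d hd
        obtain ⟨c, hc, rfl⟩ := Finset.mem_image.1 hd
        rw [hresdef]
        rw [res_weight s c (hmem c hc).2, hWt c (hmem c hc).1]
        omega
      have hDo : ∀ e ∈ D, ∀ e' ∈ D, e ≠ e' → cwOverlap e e' ≤ K - d' + t := by
        intro e he e' he' hee
        obtain ⟨c, hc, rfl⟩ := Finset.mem_image.1 he
        obtain ⟨c', hc', rfl⟩ := Finset.mem_image.1 he'
        have hcc : c ≠ c' := fun h => hee (by rw [h])
        rw [hresdef]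
        rw [res_overlap s c c' (hmem c hc).2 (hmem c' hc').2]
        have := hOv c (hmem c hc).1 c' (hmem c' hc').1 hcc
        omega
      have := ih ht' {y : σ // y ≠ s} hcard' D hDw hDo
      rw [hDcard] at this
      exact this
    -- double counting
    have hsum : (C.card : ℤ) * ((W - d' + t + 1 : ℕ) : ℤ) ≤ (Fintype.card σ : ℤ) * F t := by
      have h1 : (∑ s : σ, ((C.filter (fun c => c s = true)).card : ℤ))
          ≤ ∑ _s : σ, F t := Finset.sum_le_sum (fun s _ => key s)
      rw [Finset.sum_const, Finset.card_univ, nsmul_eq_mul] at h1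
      have h2 : (∑ s : σ, ((C.filter (fun c => c s = true)).card : ℤ))
          = (C.card : ℤ) * ((W - d' + t + 1 : ℕ) : ℤ) := by
        have h3 := double_count C
        have h4 : ∑ c ∈ C, cwWeight c = C.card * (W - d' + t + 1) := by
          rw [Finset.sum_congr rfl (fun c hc => by
            rw [hWt c hc]), Finset.sum_const, smul_eq_mul]
          ring
        have h5 : (∑ s : σ, (C.filter (fun c => c s = true)).card)
            = C.card * (W - d' + t + 1) := by rw [h3, h4]
        calc (∑ s : σ, ((C.filter (fun c => c s = true)).card : ℤ))
            = ((∑ s : σ, (C.filter (fun c => c s = true)).card : ℕ) : ℤ) := by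
              push_cast; rfl
          _ = _ := by rw [h5, Nat.cast_mul]
      rw [← h2]; exact h1
    -- conclude via the recursion formula
    rw [hFt t (by omega), Int.le_floor]
    have hwpos : (0:ℚ) < ((W - d' + t + 1 : ℕ) : ℚ) := by
      exact_mod_cast Nat.lt_of_lt_of_le Nat.zero_lt_one hw1
    rw [le_div_iff₀ hwpos]
    have hcard2 : (Fintype.card σ : ℤ) = ((S - d' + t + 1 : ℕ) : ℤ) := by
      rw [hcard]; omega
    rw [hcard2] at hsum
    have : (((C.card : ℤ) * ((W - d' + t + 1 : ℕ) : ℤ) : ℤ) : ℚ)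
        ≤ ((((S - d' + t + 1 : ℕ) : ℤ) * F t : ℤ) : ℚ) := by
      exact_mod_cast hsum
    push_cast at this ⊢
    linarith

/-- Combined Johnson-recursion / correlation-moment upper bound on the size
of a binary constant-weight code. With `S' = S - d'`, `W' = W - d'`, `K' = K - d'`, and
`A' = ∑_{u=1}^{ℓ} C(W',u)² C_{ℓ,u} / C(S',u)`, if `A' > (K')^ℓ` then `N ≤ F(d')`, where
`F(0) = ⌊((W')^ℓ - (K')^ℓ) / (A' - (K')^ℓ)⌋` and
`F(t+1) = ⌊((S - d' + t + 1) / (W - d' + t + 1)) * F(t)⌋` for `0 ≤ t < d'`. -/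
theorem cwc_combined_bound {S N W K : ℕ} (x : Fin N → Fin S → Bool)
    (hK : 1 ≤ K) (hKW : K < W) (hWS : W ≤ S) (hC : IsCWC W K x)
    (ℓ : ℕ) (hl : 1 ≤ ℓ) (d' : ℕ) (hd1 : 1 ≤ d') (hd2 : d' ≤ K)
    (A' : ℚ)
    (hA' : A' = ∑ u ∈ Finset.Icc 1 ℓ,
        (((W - d').choose u : ℚ)) ^ 2 *
          (∑ k ∈ Finset.range (u + 1),
            (-1 : ℚ) ^ k * (u.choose k : ℚ) * (((u - k : ℕ)) : ℚ) ^ ℓ)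
          / ((S - d').choose u : ℚ))
    (hAK : (((K - d' : ℕ)) : ℚ) ^ ℓ < A')
    (F : ℕ → ℤ)
    (hF0 : F 0 = ⌊((((W - d' : ℕ)) : ℚ) ^ ℓ - (((K - d' : ℕ)) : ℚ) ^ ℓ)
        / (A' - (((K - d' : ℕ)) : ℚ) ^ ℓ)⌋)
    (hFt : ∀ t, t < d' →
      F (t + 1) = ⌊(((S - d' + t + 1 : ℕ)) : ℚ) * ((F t : ℤ) : ℚ)
          / (((W - d' + t + 1 : ℕ)) : ℚ)⌋) :
    (N : ℤ) ≤ F d' := by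
  obtain ⟨hinj, hwt, hov⟩ := hC
  classical
  have h := rec_bound S W K ℓ d' hKW hWS hd2 hl A' hA' hAK F hF0 hFt d' le_rfl (Fin S)
    (by rw [Fintype.card_fin]; omega)
    (Finset.univ.image x) ?_ ?_
  · rwa [Finset.card_image_of_injective _ hinj, Finset.card_univ, Fintype.card_fin] at h
  · intro c hc
    obtain ⟨j, -, rfl⟩ := Finset.mem_image.1 hc
    rw [hwt j]; omega
  · intro c hc c' hc' hne
    obtain ⟨j, -, rfl⟩ := Finset.mem_image.1 hc
    obtain ⟨j', -, rfl⟩ := Finset.mem_image.1 hc'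
    have hjj : j ≠ j' := fun h => hne (by rw [h])
    have := hov j j' hjj
    omega
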